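/- Let K be a field of characteristic zero and f ∈ K[x,y] a polynomial satisfying f · f_y = −f_x. Then f is a constant. -/

import Mathlib

open MvPolynomial

section Aux

variable {σ : Type*} {R : Type*}

/-- Coefficient formula for partial derivatives. -/
lemma aux_coeff_pderiv [CommSemiring R] [DecidableEq σ] (i : σ) (m : σ →₀ ℕ)
    (f : MvPolynomial σ R) :
    coeff m (pderiv i f) = ((m i : R) + 1) * coeff (m + Finsupp.single i 1) f := by
  induction f using MvPolynomial.induction_on' with
  | monomial s a =>
    rw [pderiv_monomial]
    by_cases h : s = m + Finsupp.single i 1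
    · subst h
      rw [coeff_monomial, coeff_monomial, if_pos rfl, if_pos (add_tsub_cancel_right _ _)]
      simp only [Finsupp.add_apply, Finsupp.single_apply, if_pos rfl]
      push_cast
      ring
    · rw [coeff_monomial, coeff_monomial, if_neg h, mul_zero]
      by_cases hs : s i = 0
      · split_ifs <;> simp [hs]
      · have hle : Finsupp.single i 1 ≤ s := by
          rw [Finsupp.single_le_iff]
          omega
        rw [if_neg]
        intro hsm
        apply h
        rw [← hsm, tsub_add_cancel_of_le hle]
  | add p q hp hq =>
    simp [hp, hq, mul_add]

lemma aux_totalDegree_pderiv_lt [CommSemiring R] [DecidableEq σ] {i : σ}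
    {f : MvPolynomial σ R} (h : pderiv i f ≠ 0) :
    (pderiv i f).totalDegree < f.totalDegree := by
  have key : ∀ m ∈ (pderiv i f).support, (m.sum fun _ e => e) + 1 ≤ f.totalDegree := by
    intro m hm
    rw [mem_support_iff, aux_coeff_pderiv] at hm
    have hmem : m + Finsupp.single i 1 ∈ f.support := by
      rw [mem_support_iff]
      intro h0
      rw [h0, mul_zero] at hm
      exact hm rfl
    have hle := le_totalDegree hmem
    have hsum : ((m + Finsupp.single i 1).sum fun _ e => e)
        = (m.sum fun _ e => e) + 1 := by
      rw [Finsupp.sum_add_index' (fun _ => rfl) (fun _ _ _ => rfl),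
        Finsupp.sum_single_index rfl]
    omega
  obtain ⟨m₀, hm₀⟩ := support_nonempty.mpr h
  have hpos : 0 < f.totalDegree := by
    have := key m₀ hm₀
    omega
  rw [MvPolynomial.totalDegree]
  rw [Finset.sup_lt_iff (by simpa using hpos)]
  intro m hm
  have := key m hm
  omega

variable [CommRing R] [IsDomain R]

private lemma aux_small {r : MvPolynomial σ R} {n : ℕ}
    (h : ∀ d ∈ r.support, (d.sum fun _ e => e) < n) :
    r = 0 ∨ r.totalDegree < n := by
  rcases eq_or_ne r 0 with h0 | h0
  · exact Or.inl h0
  · right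
    obtain ⟨m₀, hm₀⟩ := support_nonempty.mpr h0
    have hpos : 0 < n := lt_of_le_of_lt (Nat.zero_le _) (h m₀ hm₀)
    rw [MvPolynomial.totalDegree, Finset.sup_lt_iff (by simpa using hpos)]
    exact h

private lemma aux_small_add {r s : MvPolynomial σ R} {n : ℕ}
    (hr : r = 0 ∨ r.totalDegree < n) (hs : s = 0 ∨ s.totalDegree < n) :
    r + s = 0 ∨ (r + s).totalDegree < n := by
  rcases hr with rfl | hr
  · simpa using hs
  rcases hs with rfl | hs
  · simpa using Or.inr hr
  · exact Or.inr (lt_of_le_of_lt (totalDegree_add r s) (max_lt hr hs))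

private lemma aux_small_mul {r s : MvPolynomial σ R} {m n : ℕ}
    (hr : r = 0 ∨ r.totalDegree < m) (hs : s.totalDegree ≤ n) :
    r * s = 0 ∨ (r * s).totalDegree < m + n := by
  rcases hr with rfl | hr
  · simp
  · right
    calc (r * s).totalDegree ≤ r.totalDegree + s.totalDegree := totalDegree_mul r s
      _ < m + n := by omega

private lemma aux_small_mul' {r s : MvPolynomial σ R} {m n : ℕ}
    (hr : r.totalDegree ≤ m) (hs : s = 0 ∨ s.totalDegree < n) :
    r * s = 0 ∨ (r * s).totalDegree < m + n := by
  rw [mul_comm, add_comm]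
  exact aux_small_mul hs hr

/-- Total degree is additive on products over a domain. -/
lemma aux_totalDegree_mul_eq {p q : MvPolynomial σ R} (hp : p ≠ 0) (hq : q ≠ 0) :
    (p * q).totalDegree = p.totalDegree + q.totalDegree := by
  classical
  set a := p.totalDegree with ha
  set b := q.totalDegree with hb
  set P := homogeneousComponent a p with hP
  set Q := homogeneousComponent b q with hQ
  -- top homogeneous components are nonzero
  have htop : ∀ (r : MvPolynomial σ R), r ≠ 0 →
      homogeneousComponent r.totalDegree r ≠ 0 := by
    intro r hr
    obtain ⟨d, hd, hsup⟩ := Finset.exists_mem_eq_sup r.support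
      (support_nonempty.mpr hr) (fun s => s.sum fun _ e => e)
    have hdeg : d.degree = r.totalDegree := by
      rw [MvPolynomial.totalDegree, hsup]; rfl
    intro h0
    have := coeff_homogeneousComponent (n := r.totalDegree) (φ := r) d
    rw [h0, if_pos hdeg] at this
    exact (mem_support_iff.mp hd) this.symm
  have hPne : P ≠ 0 := htop p hp
  have hQne : Q ≠ 0 := htop q hq
  have hPQ : P * Q ≠ 0 := mul_ne_zero hPne hQne
  have hdPQ : (P * Q).totalDegree = a + b :=
    ((homogeneousComponent_isHomogeneous a p).mul
      (homogeneousComponent_isHomogeneous b q)).totalDegree hPQ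
  -- residuals are small
  have hres : ∀ (r : MvPolynomial σ R),
      ∀ d ∈ (r - homogeneousComponent r.totalDegree r).support,
        (d.sum fun _ e => e) < r.totalDegree := by
    intro r d hd
    rw [mem_support_iff, coeff_sub, coeff_homogeneousComponent] at hd
    have hdne : d.degree ≠ r.totalDegree := by
      intro h; rw [if_pos h, sub_self] at hd; exact hd rfl
    rw [if_neg hdne, sub_zero] at hd
    have hle : (d.sum fun _ e => e) ≤ r.totalDegree :=
      le_totalDegree (mem_support_iff.mpr hd)
    have : (d.sum fun _ e => e) = d.degree := rfl
    omega
  have hp' : p - P = 0 ∨ (p - P).totalDegree < a := aux_small (hres p)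
  have hq' : q - Q = 0 ∨ (q - Q).totalDegree < b := aux_small (hres q)
  have hp'le : (p - P).totalDegree ≤ a := by
    rcases hp' with h | h
    · simp [h]
    · omega
  have hq'le : (q - Q).totalDegree ≤ b := by
    rcases hq' with h | h
    · simp [h]
    · omega
  have hPle : P.totalDegree ≤ a := (homogeneousComponent_isHomogeneous a p).totalDegree_le
  have hQle : Q.totalDegree ≤ b := (homogeneousComponent_isHomogeneous b q).totalDegree_le
  have key : p * q = P * Q + (P * (q - Q) + ((p - P) * Q + (p - P) * (q - Q))) := by
    ring
  have hE : (P * (q - Q) + ((p - P) * Q + (p - P) * (q - Q))) = 0 ∨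
      (P * (q - Q) + ((p - P) * Q + (p - P) * (q - Q))).totalDegree < a + b := by
    apply aux_small_add (aux_small_mul' hPle hq')
    exact aux_small_add (aux_small_mul hp' hQle) (aux_small_mul hp' hq'le)
  rcases hE with hE | hE
  · rw [key, hE, add_zero, hdPQ]
  · rw [key, totalDegree_add_eq_left_of_totalDegree_lt (by rw [hdPQ]; exact hE), hdPQ]

end Aux

/-- If `f ∈ K[x,y]` satisfies `f·f_y = −f_x`, then `f` is a constant. -/
theorem stmt_10 (K : Type*) [Field K] [CharZero K]
    (f : MvPolynomial (Fin 2) K)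
    (heq : f * pderiv (1 : Fin 2) f = - pderiv (0 : Fin 2) f) :
    ∃ c : K, f = MvPolynomial.C c := by
  classical
  by_cases hy : pderiv (1 : Fin 2) f = 0
  · have hx : pderiv (0 : Fin 2) f = 0 := by
      rw [hy, mul_zero] at heq
      exact neg_eq_zero.mp heq.symm
    have hall : ∀ i : Fin 2, pderiv i f = 0 := by
      intro i
      fin_cases i <;> assumption
    refine ⟨coeff 0 f, ?_⟩
    ext m
    rw [coeff_C]
    by_cases hm : (0 : Fin 2 →₀ ℕ) = m
    · rw [if_pos hm, ← hm]
    · rw [if_neg hm]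
      by_contra hc
      obtain ⟨i, hi⟩ : ∃ i, m i ≠ 0 := by
        by_contra h
        push_neg at h
        exact hm (by ext j; simp [h j])
      have hform := aux_coeff_pderiv i (m - Finsupp.single i 1) f
      have hle : Finsupp.single i 1 ≤ m := by
        rw [Finsupp.single_le_iff]; omega
      rw [hall i, tsub_add_cancel_of_le hle, coeff_zero] at hform
      rcases mul_eq_zero.mp hform.symm with h | h
      · exact Nat.cast_add_one_ne_zero _ h
      · exact hc h
  · exfalso
    have hf : f ≠ 0 := fun h => hy (by simp [h])
    have hx0 : pderiv (0 : Fin 2) f ≠ 0 := by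
      intro h
      rw [h, neg_zero] at heq
      rcases mul_eq_zero.mp heq with h' | h'
      · exact hf h'
      · exact hy h'
    have h1 := aux_totalDegree_mul_eq hf hy
    rw [heq, totalDegree_neg] at h1
    have h2 := aux_totalDegree_pderiv_lt hx0
    omega
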